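/- Let a₀ ≠ 0, a₁, d₀ ≠ 0, k₁ ≠ 0, k₃ be real constants with d₀ ≠ 3k₁/2 and d₀ ≠ 2k₁, and let τ(t) = 3k₁ t + k₃ on an interval where τ > 0. Define A(t) = a₀·τ^{−d₀/(3k₁)} + a₁·τ^{−1/3} and β'(t) = −(1/2)(τ(t)·A(t)·A'(t) + k₁·A(t)²). Then Q(t) := A'(t)/A(t) − β''(t)/β'(t) equals d₀/τ(t) for all t in the interval (wherever A(t) ≠ 0 and β'(t) ≠ 0). -/

import Mathlib

open Real

theorem stmt3 (a₀ a₁ d₀ k₁ k₃ : ℝ) (ha₀ : a₀ ≠ 0) (hd₀ : d₀ ≠ 0) (hk₁ : k₁ ≠ 0)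
    (h1 : d₀ ≠ 3 * k₁ / 2) (h2 : d₀ ≠ 2 * k₁)
    (τ A βp Q : ℝ → ℝ)
    (hτ : ∀ t, τ t = 3 * k₁ * t + k₃)
    (hA : ∀ t, A t = a₀ * τ t ^ (-(d₀ / (3 * k₁))) + a₁ * τ t ^ (-(1/3 : ℝ)))
    (hβp : ∀ t, βp t = -(1/2) * (τ t * A t * deriv A t + k₁ * (A t)^2))
    (hQ : ∀ t, Q t = deriv A t / A t - deriv βp t / βp t) :
    ∀ t, τ t > 0 → A t ≠ 0 → βp t ≠ 0 → Q t = d₀ / τ t := by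
  set p : ℝ := d₀ / (3 * k₁) with hp
  -- derivative of τ
  have hτd : ∀ s : ℝ, HasDerivAt τ (3 * k₁) s := by
    intro s
    have h := ((hasDerivAt_id s).const_mul (3 * k₁)).add_const k₃
    simp only [mul_one] at h
    apply h.congr_of_eventuallyEq
    filter_upwards with r
    simp [hτ r]
  have hτcont : Continuous τ := continuous_iff_continuousAt.2 fun s => (hτd s).continuousAt
  have hpow : ∀ (c : ℝ) (s : ℝ), 0 < τ s →
      HasDerivAt (fun r => τ r ^ c) (3 * k₁ * c * τ s ^ (c - 1)) s := by
    intro c s hs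
    exact (hτd s).rpow_const (Or.inl hs.ne')
  have hAfun : A = fun s => a₀ * τ s ^ (-p) + a₁ * τ s ^ (-(1/3 : ℝ)) := funext hA
  have hAd : ∀ s : ℝ, 0 < τ s → HasDerivAt A
      (a₀ * (3 * k₁ * -p * τ s ^ (-p - 1)) +
       a₁ * (3 * k₁ * -(1/3 : ℝ) * τ s ^ (-(1/3 : ℝ) - 1))) s := by
    intro s hs
    rw [hAfun]
    exact ((hpow (-p) s hs).const_mul a₀).add ((hpow (-(1/3 : ℝ)) s hs).const_mul a₁)
  intro t ht hAt hβt
  have ht0 : (0:ℝ) < τ t := ht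
  -- derivative of the derivative expression
  have hdA : HasDerivAt
      (fun s => a₀ * (3 * k₁ * -p * τ s ^ (-p - 1)) +
        a₁ * (3 * k₁ * -(1/3 : ℝ) * τ s ^ (-(1/3 : ℝ) - 1)))
      (a₀ * (3 * k₁ * -p * (3 * k₁ * (-p - 1) * τ t ^ (-p - 1 - 1))) +
       a₁ * (3 * k₁ * -(1/3 : ℝ) * (3 * k₁ * (-(1/3 : ℝ) - 1) * τ t ^ (-(1/3 : ℝ) - 1 - 1)))) t := by
    exact (((hpow (-p - 1) t ht0).const_mul (3 * k₁ * -p)).const_mul a₀).add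
      (((hpow (-(1/3 : ℝ) - 1) t ht0).const_mul (3 * k₁ * -(1/3 : ℝ))).const_mul a₁)
  have hAt' := hAd t ht0
  have hG := (((hτd t).mul hAt').mul hdA).add ((hAt'.pow 2).const_mul k₁) |>.const_mul (-(1/2 : ℝ))
  have hev : βp =ᶠ[nhds t] fun s => -(1/2 : ℝ) *
      (τ s * A s * (a₀ * (3 * k₁ * -p * τ s ^ (-p - 1)) +
        a₁ * (3 * k₁ * -(1/3 : ℝ) * τ s ^ (-(1/3 : ℝ) - 1))) + k₁ * (A s)^2) := by
    have hop : IsOpen {s : ℝ | 0 < τ s} := isOpen_lt continuous_const hτcont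
    filter_upwards [hop.mem_nhds ht0] with s hs
    rw [hβp s, (hAd s hs).deriv]
  have hβd := hG.congr_of_eventuallyEq hev
  rw [hA t] at hAt
  rw [hβp t, hAt'.deriv, hA t] at hβt
  rw [hQ t, hβd.deriv, Pi.mul_apply, hβp t, hAt'.deriv, hA t]
  simp only [Real.rpow_sub ht0, Real.rpow_one] at hβt ⊢
  rw [div_sub_div _ _ hAt hβt, div_eq_div_iff (mul_ne_zero hAt hβt) ht0.ne']
  rw [hp]
  have h3 : (3:ℝ) * k₁ ≠ 0 := by positivity
  field_simp
  ring
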